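/- Let f : (ZMod 3)^K → ZMod 3 and g : (ZMod 3)^L → ZMod 3 be arbitrary functions, and write F = ω^f and G = ω^g. Then, under the 4NAT test distribution, Pr[4NAT(f(x), g(y), g(z), g(w)) = 1] = 5/9 + (2/3)·Re E[F(x)·conj(G(y))] + (2/3)·Re E[G(y)·conj(G(z))] − (2/3)·Re E[F(x)·G(y)·G(z)] − (2/9)·Re E[G(y)·G(z)·G(w)]. -/

import Mathlib

open Finset

def fourNAT (a : Fin 4 → ZMod 3) : Prop := ∃ c : ZMod 3, ∀ i, a i ≠ c

def TwoPair (a : Fin 4 → ZMod 3) : Prop :=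
  ∃ b c : ZMod 3, b ≠ c ∧
    (univ.filter fun i => a i = b).card = 2 ∧
    (univ.filter fun i => a i = c).card = 2

open Classical in
noncomputable def natTestPr (d K : ℕ)
    (E : (Fin K → ZMod 3) → ((Fin K × Fin d) → ZMod 3) →
         ((Fin K × Fin d) → ZMod 3) → ((Fin K × Fin d) → ZMod 3) → Prop) : ℝ :=
  (∑ x : Fin K → ZMod 3, ∑ y : (Fin K × Fin d) → ZMod 3,
    ∑ z : (Fin K × Fin d) → ZMod 3, ∑ w : (Fin K × Fin d) → ZMod 3,
      (if (∀ j : Fin K × Fin d, TwoPair ![x j.1, y j, z j, w j]) ∧ E x y z w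
       then 1 else 0))
    / (3 ^ K * 6 ^ (d * K))

noncomputable def ω : ℂ := Complex.exp (2 * (Real.pi : ℂ) * Complex.I / 3)

open Classical in
noncomputable def natTestExpC (d K : ℕ)
    (h : (Fin K → ZMod 3) → ((Fin K × Fin d) → ZMod 3) →
         ((Fin K × Fin d) → ZMod 3) → ((Fin K × Fin d) → ZMod 3) → ℂ) : ℂ :=
  (∑ x : Fin K → ZMod 3, ∑ y : (Fin K × Fin d) → ZMod 3,
    ∑ z : (Fin K × Fin d) → ZMod 3, ∑ w : (Fin K × Fin d) → ZMod 3,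
      (if ∀ j : Fin K × Fin d, TwoPair ![x j.1, y j, z j, w j] then 1 else 0)
        * h x y z w)
    / (3 ^ K * 6 ^ (d * K))

/-! ### auxiliary lemmas about `ω` -/

lemma omega_pow_three : ω ^ 3 = 1 := by
  rw [ω, ← Complex.exp_nat_mul]
  have : ((3:ℕ):ℂ) * (2 * (Real.pi : ℂ) * Complex.I / 3) = 2 * Real.pi * Complex.I := by
    push_cast; ring
  rw [this, Complex.exp_two_pi_mul_I]

lemma omega_ne_one : ω ≠ 1 := by
  intro h
  rw [ω, Complex.exp_eq_one_iff] at h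
  obtain ⟨n, hn⟩ := h
  have h2 : (2 * (Real.pi:ℂ) * Complex.I) ≠ 0 := by
    simp [Real.pi_ne_zero, Complex.I_ne_zero]
  field_simp at hn
  have h3 : ((1 : ℤ) : ℂ) * (2 * (Real.pi:ℂ) * Complex.I)
      = ((n * 3 : ℤ) : ℂ) * (2 * (Real.pi:ℂ) * Complex.I) := by
    push_cast; linear_combination (2 * (Real.pi:ℂ) * Complex.I) * hn
  have h4 := mul_right_cancel₀ h2 h3
  have := Int.cast_injective h4
  omega

lemma omega_sum : 1 + ω + ω ^ 2 = 0 := by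
  have h : (ω - 1) * (1 + ω + ω ^ 2) = 0 := by
    linear_combination omega_pow_three
  rcases mul_eq_zero.1 h with h1 | h2
  · exact absurd (sub_eq_zero.1 h1) omega_ne_one
  · exact h2

lemma omega_ne_zero : ω ≠ 0 := by
  rw [ω]; exact Complex.exp_ne_zero _

lemma omega_conj : (starRingEnd ℂ) ω = ω ^ 2 := by
  have h1 : (starRingEnd ℂ) ω * ω = ω ^ 2 * ω := by
    rw [mul_comm ((starRingEnd ℂ) ω), Complex.mul_conj, ← pow_succ]
    rw [omega_pow_three]
    have habs : ‖ω‖ = 1 := by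
      rw [ω, Complex.norm_exp]; norm_num
    rw [Complex.normSq_eq_norm_sq, habs]; norm_num
  exact mul_right_cancel₀ omega_ne_zero h1

lemma omega_re : ω.re = -(1/2) := by
  have h := omega_sum
  have h2 : (ω ^ 2).re = ω.re := by
    rw [← omega_conj, Complex.conj_re]
  have := congrArg Complex.re h
  simp [Complex.add_re, h2] at this
  linarith

noncomputable def rr (k : ZMod 3) : ℝ := if k = 0 then 1 else -(1/2)

lemma rr0 : rr 0 = 1 := if_pos rfl
lemma rr1 : rr 1 = -(1/2) := if_neg (by decide)
lemma rr2 : rr 2 = -(1/2) := if_neg (by decide)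

lemma omega_pow_re (n : ℕ) : (ω ^ n).re = rr (n : ZMod 3) := by
  have key : ω ^ n = ω ^ (n % 3) := by
    conv_lhs => rw [← Nat.mod_add_div n 3, pow_add, pow_mul, omega_pow_three, one_pow, mul_one]
  rw [key]
  have h3 : ((n : ZMod 3)) = ((n % 3 : ℕ) : ZMod 3) := by
    rw [ZMod.natCast_mod]
  rw [h3]
  have hlt : n % 3 < 3 := Nat.mod_lt _ (by norm_num)
  interval_cases h : n % 3
  · simp [rr]
  · rw [show ((1:ℕ):ZMod 3) = 1 by norm_num, pow_one, omega_re]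
    simp [rr]
  · rw [show ((2:ℕ):ZMod 3) = 2 by norm_num]
    have : (ω^2).re = ω.re := by rw [← omega_conj, Complex.conj_re]
    rw [this, omega_re]
    norm_num [rr, show (2:ZMod 3) ≠ 0 by decide]

lemma rr_congr {u v : ZMod 3} (h : u = v) : rr u = rr v := by rw [h]

lemma re_pair (u v : ZMod 3) :
    (ω ^ u.val * (starRingEnd ℂ) (ω ^ v.val)).re = rr (u - v) := by
  rw [map_pow, omega_conj, ← pow_mul, ← pow_add, omega_pow_re]
  apply rr_congr
  push_cast [ZMod.natCast_val, ZMod.cast_id]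
  have h3 : (3 : ZMod 3) = 0 := rfl
  linear_combination v * h3

lemma re_triple (u v t : ZMod 3) :
    (ω ^ u.val * ω ^ v.val * ω ^ t.val).re = rr (u + v + t) := by
  rw [← pow_add, ← pow_add, omega_pow_re]
  apply rr_congr
  push_cast [ZMod.natCast_val, ZMod.cast_id]
  ring

/-! ### pointwise Fourier expansion of the 4NAT indicator -/

instance : DecidablePred fourNAT := fun a =>
  decidable_of_iff (∃ c : ZMod 3, ∀ i, a i ≠ c) Iff.rfl

lemma zmod3_cases : ∀ u : ZMod 3, u = 0 ∨ u = 1 ∨ u = 2 := by decide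

set_option maxHeartbeats 2000000 in
lemma ptwise (a b c e : ZMod 3) :
    (if fourNAT ![a,b,c,e] then (1:ℝ) else 0)
      = 5/9 + (2/9)*(rr (a-b) + rr (a-c) + rr (a-e))
        + (2/9)*(rr (b-c) + rr (b-e) + rr (c-e))
        - (2/9)*(rr (a+b+c) + rr (a+b+e) + rr (a+c+e))
        - (2/9)*rr (b+c+e) := by
  rcases zmod3_cases a with rfl | rfl | rfl <;>
  rcases zmod3_cases b with rfl | rfl | rfl <;>
  rcases zmod3_cases c with rfl | rfl | rfl <;>
  rcases zmod3_cases e with rfl | rfl | rfl <;>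
  · first | rw [if_pos (by decide)] | rw [if_neg (by decide)]
    simp only [show ((0:ZMod 3) - 0) = 0 by decide,
      show ((0:ZMod 3) - 1) = 2 by decide,
      show ((0:ZMod 3) - 2) = 1 by decide,
      show ((1:ZMod 3) - 0) = 1 by decide,
      show ((1:ZMod 3) - 1) = 0 by decide,
      show ((1:ZMod 3) - 2) = 2 by decide,
      show ((2:ZMod 3) - 0) = 2 by decide,
      show ((2:ZMod 3) - 1) = 1 by decide,
      show ((2:ZMod 3) - 2) = 0 by decide,
      show ((0:ZMod 3) + 0) = 0 by decide,
      show ((0:ZMod 3) + 1) = 1 by decide,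
      show ((0:ZMod 3) + 2) = 2 by decide,
      show ((1:ZMod 3) + 0) = 1 by decide,
      show ((1:ZMod 3) + 1) = 2 by decide,
      show ((1:ZMod 3) + 2) = 0 by decide,
      show ((2:ZMod 3) + 0) = 2 by decide,
      show ((2:ZMod 3) + 1) = 0 by decide,
      show ((2:ZMod 3) + 2) = 1 by decide,
      rr0, rr1, rr2]
    norm_num

/-! ### TwoPair symmetries and counting -/

instance : DecidablePred TwoPair := fun a =>
  decidable_of_iff (∃ b c : ZMod 3, b ≠ c ∧
    (univ.filter fun i => a i = b).card = 2 ∧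
    (univ.filter fun i => a i = c).card = 2) Iff.rfl

lemma tp_swap23 : ∀ a b c e : ZMod 3, TwoPair ![a,b,c,e] ↔ TwoPair ![a,b,e,c] := by decide

lemma tp_swap12 : ∀ a b c e : ZMod 3, TwoPair ![a,b,c,e] ↔ TwoPair ![a,c,b,e] := by decide

lemma count6N : ∀ a : ZMod 3,
    (∑ b : ZMod 3, ∑ c : ZMod 3, ∑ v : ZMod 3,
      if TwoPair ![a,b,c,v] then (1:ℕ) else 0) = 6 := by decide

lemma count6 (a : ZMod 3) :
    (∑ b : ZMod 3, ∑ c : ZMod 3, ∑ v : ZMod 3,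
      if TwoPair ![a,b,c,v] then (1:ℝ) else 0) = 6 := by
  have h := count6N a
  have h2 : (∑ b : ZMod 3, ∑ c : ZMod 3, ∑ v : ZMod 3,
      if TwoPair ![a,b,c,v] then (1:ℝ) else 0)
      = ((∑ b : ZMod 3, ∑ c : ZMod 3, ∑ v : ZMod 3,
      if TwoPair ![a,b,c,v] then (1:ℕ) else 0 : ℕ) : ℝ) := by
    push_cast
    refine Finset.sum_congr rfl fun b _ => Finset.sum_congr rfl fun c _ =>
      Finset.sum_congr rfl fun v _ => ?_
    by_cases hT : TwoPair ![a,b,c,v] <;> simp [hT]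
  rw [h2, h]; norm_num

/-- interchange of a sum over functions and a product -/
lemma sum_prod_fn {ι V : Type*} [Fintype ι] [DecidableEq ι] [Fintype V] (F : ι → V → ℝ) :
    ∑ g : ι → V, ∏ i, F i (g i) = ∏ i, ∑ v, F i v := (Fintype.prod_sum F).symm

/-! ### the weighted sum `Q` -/

section Main

variable (d K : ℕ)

open Classical in
noncomputable def Wt (x : Fin K → ZMod 3) (y z w : (Fin K × Fin d) → ZMod 3) : ℝ :=
  if ∀ j : Fin K × Fin d, TwoPair ![x j.1, y j, z j, w j] then 1 else 0

noncomputable def Q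
    (F : (Fin K → ZMod 3) → ((Fin K × Fin d) → ZMod 3) →
         ((Fin K × Fin d) → ZMod 3) → ((Fin K × Fin d) → ZMod 3) → ℝ) : ℝ :=
  ∑ x : Fin K → ZMod 3, ∑ y : (Fin K × Fin d) → ZMod 3,
    ∑ z : (Fin K × Fin d) → ZMod 3, ∑ w : (Fin K × Fin d) → ZMod 3,
      Wt d K x y z w * F x y z w

variable {d K}

lemma Q_congr {F G} (h : ∀ x y z w, F x y z w = G x y z w) : Q d K F = Q d K G := by
  unfold Q
  exact Finset.sum_congr rfl fun x _ => Finset.sum_congr rfl fun y _ =>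
    Finset.sum_congr rfl fun z _ => Finset.sum_congr rfl fun w _ => by rw [h]

lemma Q_add (F G) : Q d K (fun x y z w => F x y z w + G x y z w) = Q d K F + Q d K G := by
  unfold Q
  simp only [mul_add, Finset.sum_add_distrib]

lemma Q_sub (F G) : Q d K (fun x y z w => F x y z w - G x y z w) = Q d K F - Q d K G := by
  unfold Q
  simp only [mul_sub, Finset.sum_sub_distrib]

lemma Q_cmul (c : ℝ) (F) : Q d K (fun x y z w => c * F x y z w) = c * Q d K F := by
  unfold Q
  simp only [Finset.mul_sum]
  exact Finset.sum_congr rfl fun x _ => Finset.sum_congr rfl fun y _ =>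
    Finset.sum_congr rfl fun z _ => Finset.sum_congr rfl fun w _ => by ring

lemma wt_swap_zw (x : Fin K → ZMod 3) (y z w : (Fin K × Fin d) → ZMod 3) :
    Wt d K x y z w = Wt d K x y w z := by
  unfold Wt
  by_cases h : ∀ j : Fin K × Fin d, TwoPair ![x j.1, y j, z j, w j]
  · rw [if_pos h, if_pos fun j => (tp_swap23 _ _ _ _).1 (h j)]
  · rw [if_neg h, if_neg fun h' => h fun j => (tp_swap23 _ _ _ _).2 (h' j)]

lemma wt_swap_yz (x : Fin K → ZMod 3) (y z w : (Fin K × Fin d) → ZMod 3) :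
    Wt d K x y z w = Wt d K x z y w := by
  unfold Wt
  by_cases h : ∀ j : Fin K × Fin d, TwoPair ![x j.1, y j, z j, w j]
  · rw [if_pos h, if_pos fun j => (tp_swap12 _ _ _ _).1 (h j)]
  · rw [if_neg h, if_neg fun h' => h fun j => (tp_swap12 _ _ _ _).2 (h' j)]

lemma Q_swap_zw (F) : Q d K F = Q d K (fun x y z w => F x y w z) := by
  unfold Q
  refine Finset.sum_congr rfl fun x _ => Finset.sum_congr rfl fun y _ => ?_
  rw [Finset.sum_comm]
  exact Finset.sum_congr rfl fun z _ => Finset.sum_congr rfl fun w _ => by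
    rw [wt_swap_zw]

lemma Q_swap_yz (F) : Q d K F = Q d K (fun x y z w => F x z y w) := by
  unfold Q
  refine Finset.sum_congr rfl fun x _ => ?_
  rw [Finset.sum_comm]
  exact Finset.sum_congr rfl fun y _ => Finset.sum_congr rfl fun z _ =>
    Finset.sum_congr rfl fun w _ => by rw [wt_swap_yz]

set_option maxHeartbeats 1000000 in
/-- total mass -/
lemma Q_one : Q d K (fun _ _ _ _ => (1:ℝ)) = 3 ^ K * 6 ^ (d * K) := by
  unfold Q
  have hx : ∀ x : Fin K → ZMod 3,
      (∑ y : (Fin K × Fin d) → ZMod 3, ∑ z : (Fin K × Fin d) → ZMod 3,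
        ∑ w : (Fin K × Fin d) → ZMod 3, Wt d K x y z w * 1) = 6 ^ (d * K) := by
    intro x
    have h1 : ∀ y z w : (Fin K × Fin d) → ZMod 3, Wt d K x y z w * 1
        = ∏ j : Fin K × Fin d, (if TwoPair ![x j.1, y j, z j, w j] then (1:ℝ) else 0) := by
      intro y z w
      rw [mul_one]
      unfold Wt
      by_cases h : ∀ j : Fin K × Fin d, TwoPair ![x j.1, y j, z j, w j]
      · rw [if_pos h, Finset.prod_congr rfl fun j _ => if_pos (h j), Finset.prod_const_one]
      · push_neg at h
        obtain ⟨j0, hj0⟩ := h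
        rw [if_neg (by push_neg; exact ⟨j0, hj0⟩)]
        exact (Finset.prod_eq_zero (Finset.mem_univ j0)
          (if_neg hj0 : (if TwoPair ![x j0.1, y j0, z j0, w j0] then (1:ℝ) else 0) = 0)).symm
    rw [show (∑ y : (Fin K × Fin d) → ZMod 3, ∑ z : (Fin K × Fin d) → ZMod 3,
        ∑ w : (Fin K × Fin d) → ZMod 3, Wt d K x y z w * 1)
        = ∑ y : (Fin K × Fin d) → ZMod 3, ∑ z : (Fin K × Fin d) → ZMod 3,
          ∑ w : (Fin K × Fin d) → ZMod 3, ∏ j : Fin K × Fin d,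
            (if TwoPair ![x j.1, y j, z j, w j] then (1:ℝ) else 0) from
      Finset.sum_congr rfl fun y _ => Finset.sum_congr rfl fun z _ =>
        Finset.sum_congr rfl fun w _ => h1 y z w]
    have e1 : ∀ y z : (Fin K × Fin d) → ZMod 3,
        (∑ w : (Fin K × Fin d) → ZMod 3, ∏ j : Fin K × Fin d,
          (if TwoPair ![x j.1, y j, z j, w j] then (1:ℝ) else 0))
        = ∏ j : Fin K × Fin d, ∑ v : ZMod 3,
            (if TwoPair ![x j.1, y j, z j, v] then (1:ℝ) else 0) := by
      intro y z
      have h := sum_prod_fn (fun (j : Fin K × Fin d) (v : ZMod 3) =>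
        if TwoPair ![x j.1, y j, z j, v] then (1:ℝ) else 0)
      exact h
    rw [Finset.sum_congr rfl fun y (_ : y ∈ univ) =>
      Finset.sum_congr rfl fun z _ => e1 y z]
    have e2 : ∀ y : (Fin K × Fin d) → ZMod 3,
        (∑ z : (Fin K × Fin d) → ZMod 3, ∏ j : Fin K × Fin d, ∑ v : ZMod 3,
          (if TwoPair ![x j.1, y j, z j, v] then (1:ℝ) else 0))
        = ∏ j : Fin K × Fin d, ∑ c : ZMod 3, ∑ v : ZMod 3,
            (if TwoPair ![x j.1, y j, c, v] then (1:ℝ) else 0) := by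
      intro y
      have h := sum_prod_fn (fun (j : Fin K × Fin d) (c : ZMod 3) => ∑ v : ZMod 3,
        if TwoPair ![x j.1, y j, c, v] then (1:ℝ) else 0)
      exact h
    rw [Finset.sum_congr rfl fun y (_ : y ∈ univ) => e2 y]
    have e3 : (∑ y : (Fin K × Fin d) → ZMod 3, ∏ j : Fin K × Fin d,
          ∑ c : ZMod 3, ∑ v : ZMod 3,
          (if TwoPair ![x j.1, y j, c, v] then (1:ℝ) else 0))
        = ∏ j : Fin K × Fin d, ∑ b : ZMod 3, ∑ c : ZMod 3, ∑ v : ZMod 3,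
            (if TwoPair ![x j.1, b, c, v] then (1:ℝ) else 0) := by
      have h := sum_prod_fn (fun (j : Fin K × Fin d) (b : ZMod 3) =>
        ∑ c : ZMod 3, ∑ v : ZMod 3,
        if TwoPair ![x j.1, b, c, v] then (1:ℝ) else 0)
      exact h
    rw [e3, Finset.prod_congr rfl fun j _ => count6 (x j.1), Finset.prod_const,
      Finset.card_univ, Fintype.card_prod, Fintype.card_fin, Fintype.card_fin, Nat.mul_comm]
  rw [Finset.sum_congr rfl fun x _ => hx x, Finset.sum_const, Finset.card_univ, nsmul_eq_mul]
  congr 1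
  rw [Fintype.card_fun, ZMod.card, Fintype.card_fin]
  push_cast
  ring

open Classical in
lemma pr_eq (E) (hEd : ∀ x y z w, Decidable (E x y z w)) : natTestPr d K E
    = Q d K (fun x y z w => @ite ℝ (E x y z w) (hEd x y z w) 1 0)
      / (3 ^ K * 6 ^ (d * K)) := by
  unfold natTestPr Q
  refine congrArg (fun t => t / ((3:ℝ) ^ K * 6 ^ (d * K))) ?_
  refine Finset.sum_congr rfl fun x _ => Finset.sum_congr rfl fun y _ =>
    Finset.sum_congr rfl fun z _ => Finset.sum_congr rfl fun w _ => ?_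
  change _ = Wt d K x y z w * @ite ℝ (E x y z w) (hEd x y z w) 1 0
  unfold Wt
  by_cases hP : ∀ j : Fin K × Fin d, TwoPair ![x j.1, y j, z j, w j] <;>
    by_cases hE : E x y z w
  · rw [if_pos ⟨hP, hE⟩, if_pos hP, if_pos hE, one_mul]
  · rw [if_neg (fun hc => hE hc.2), if_pos hP, if_neg hE, mul_zero]
  · rw [if_neg (fun hc => hP hc.1), if_neg hP, zero_mul]
  · rw [if_neg (fun hc => hP hc.1), if_neg hP, zero_mul]

open Classical in
lemma exp_eq (h) : (natTestExpC d K h).re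
    = Q d K (fun x y z w => (h x y z w).re) / (3 ^ K * 6 ^ (d * K)) := by
  unfold natTestExpC Q
  rw [show ((3:ℂ) ^ K * 6 ^ (d * K)) = (((3 ^ K * 6 ^ (d * K) : ℝ)) : ℂ) by push_cast; ring]
  rw [Complex.div_ofReal_re]
  refine congrArg (fun t => t / ((3:ℝ) ^ K * 6 ^ (d * K))) ?_
  rw [Complex.re_sum]
  refine Finset.sum_congr rfl fun x _ => ?_
  rw [Complex.re_sum]
  refine Finset.sum_congr rfl fun y _ => ?_
  rw [Complex.re_sum]
  refine Finset.sum_congr rfl fun z _ => ?_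
  rw [Complex.re_sum]
  refine Finset.sum_congr rfl fun w _ => ?_
  change _ = Wt d K x y z w * (h x y z w).re
  unfold Wt
  by_cases hP : ∀ j : Fin K × Fin d, TwoPair ![x j.1, y j, z j, w j]
  · rw [if_pos hP, if_pos hP, one_mul, one_mul]
  · rw [if_neg hP, if_neg hP, zero_mul, zero_mul, Complex.zero_re]

end Main

set_option maxHeartbeats 1000000 in
theorem natTest_expansion (d K : ℕ) (hd : 0 < d) (hK : 0 < K)
    (f : (Fin K → ZMod 3) → ZMod 3) (g : ((Fin K × Fin d) → ZMod 3) → ZMod 3) :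
    natTestPr d K (fun x y z w => fourNAT ![f x, g y, g z, g w])
      = 5 / 9
        + (2 / 3) * (natTestExpC d K (fun x y _z _w =>
            ω ^ (f x).val * (starRingEnd ℂ) (ω ^ (g y).val))).re
        + (2 / 3) * (natTestExpC d K (fun _x y z _w =>
            ω ^ (g y).val * (starRingEnd ℂ) (ω ^ (g z).val))).re
        - (2 / 3) * (natTestExpC d K (fun x y z _w =>
            ω ^ (f x).val * ω ^ (g y).val * ω ^ (g z).val)).re
        - (2 / 9) * (natTestExpC d K (fun _x y z w =>
            ω ^ (g y).val * ω ^ (g z).val * ω ^ (g w).val)).re := by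
  have hD : ((3:ℝ) ^ K * 6 ^ (d * K)) ≠ 0 := by positivity
  -- rewrite the probability
  have hPr : natTestPr d K (fun x y z w => fourNAT ![f x, g y, g z, g w])
      = Q d K (fun x y z w =>
          if fourNAT ![f x, g y, g z, g w] then (1:ℝ) else 0)
        / (3 ^ K * 6 ^ (d * K)) := pr_eq _ (fun _ _ _ _ => inferInstance)
  -- the expectations
  have hE1 : (natTestExpC d K (fun x y _z _w =>
      ω ^ (f x).val * (starRingEnd ℂ) (ω ^ (g y).val))).re
      = Q d K (fun x y _ _ => rr (f x - g y)) / (3 ^ K * 6 ^ (d * K)) := by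
    rw [exp_eq]
    refine congrArg (fun t => t / ((3:ℝ) ^ K * 6 ^ (d * K))) ?_
    exact Q_congr fun x y z w => re_pair (f x) (g y)
  have hE2 : (natTestExpC d K (fun _x y z _w =>
      ω ^ (g y).val * (starRingEnd ℂ) (ω ^ (g z).val))).re
      = Q d K (fun _ y z _ => rr (g y - g z)) / (3 ^ K * 6 ^ (d * K)) := by
    rw [exp_eq]
    refine congrArg (fun t => t / ((3:ℝ) ^ K * 6 ^ (d * K))) ?_
    exact Q_congr fun x y z w => re_pair (g y) (g z)
  have hE3 : (natTestExpC d K (fun x y z _w =>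
      ω ^ (f x).val * ω ^ (g y).val * ω ^ (g z).val)).re
      = Q d K (fun x y z _ => rr (f x + g y + g z)) / (3 ^ K * 6 ^ (d * K)) := by
    rw [exp_eq]
    refine congrArg (fun t => t / ((3:ℝ) ^ K * 6 ^ (d * K))) ?_
    exact Q_congr fun x y z w => re_triple (f x) (g y) (g z)
  have hE4 : (natTestExpC d K (fun _x y z w =>
      ω ^ (g y).val * ω ^ (g z).val * ω ^ (g w).val)).re
      = Q d K (fun _ y z w => rr (g y + g z + g w)) / (3 ^ K * 6 ^ (d * K)) := by
    rw [exp_eq]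
    refine congrArg (fun t => t / ((3:ℝ) ^ K * 6 ^ (d * K))) ?_
    exact Q_congr fun x y z w => re_triple (g y) (g z) (g w)
  -- symmetry reductions
  have hsxz : Q d K (fun x _ z _ => rr (f x - g z))
      = Q d K (fun x y _ _ => rr (f x - g y)) := by
    rw [Q_swap_yz (fun x _ z _ => rr (f x - g z))]
  have hsxw : Q d K (fun x _ _ w => rr (f x - g w))
      = Q d K (fun x y _ _ => rr (f x - g y)) := by
    rw [Q_swap_zw (fun x _ _ w => rr (f x - g w))]
    exact hsxz
  have hsyw : Q d K (fun _ y _ w => rr (g y - g w))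
      = Q d K (fun _ y z _ => rr (g y - g z)) := by
    rw [Q_swap_zw (fun _ y _ w => rr (g y - g w))]
  have hszw : Q d K (fun _ _ z w => rr (g z - g w))
      = Q d K (fun _ y z _ => rr (g y - g z)) := by
    rw [Q_swap_yz (fun _ _ z w => rr (g z - g w))]
    exact hsyw
  have htxyw : Q d K (fun x y _ w => rr (f x + g y + g w))
      = Q d K (fun x y z _ => rr (f x + g y + g z)) := by
    rw [Q_swap_zw (fun x y _ w => rr (f x + g y + g w))]
  have htxzw : Q d K (fun x _ z w => rr (f x + g z + g w))
      = Q d K (fun x y z _ => rr (f x + g y + g z)) := by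
    rw [Q_swap_yz (fun x _ z w => rr (f x + g z + g w))]
    exact htxyw
  -- main pointwise expansion
  have hexp : Q d K (fun x y z w =>
      if fourNAT ![f x, g y, g z, g w] then (1:ℝ) else 0)
      = Q d K (fun x y z w =>
          (5/9) * (1:ℝ)
          + (2/9) * rr (f x - g y) + (2/9) * rr (f x - g z) + (2/9) * rr (f x - g w)
          + (2/9) * rr (g y - g z) + (2/9) * rr (g y - g w) + (2/9) * rr (g z - g w)
          - (2/9) * rr (f x + g y + g z) - (2/9) * rr (f x + g y + g w)
          - (2/9) * rr (f x + g z + g w)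
          - (2/9) * rr (g y + g z + g w)) := by
    refine Q_congr fun x y z w => ?_
    have hpt := ptwise (f x) (g y) (g z) (g w)
    by_cases h : fourNAT ![f x, g y, g z, g w]
    · rw [if_pos h] at hpt ⊢
      linear_combination hpt
    · rw [if_neg h] at hpt ⊢
      linear_combination hpt
  rw [hPr, hexp]
  simp only [Q_sub, Q_add, Q_cmul, Q_one]
  rw [hsxz, hsxw, hsyw, hszw, htxyw, htxzw, hE1, hE2, hE3, hE4]
  field_simp
  ring
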